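/- In the modified Frege method with m candidates where at round t ∈ {1,...,m} the normalized plurality scores are p_j^t = 0 for j < t and p_j^t = 1/(m-t+1) for j ≥ t, and ties are broken in favor of the smaller-indexed candidate, candidate t is elected in round t for each t ∈ {1,...,m}. Consequently, at time t = m-1 candidate m has r_m(m-1) = 0 while Σ_{s=1}^{m-1} p_m^s = Σ_{i=2}^m 1/i. -/
import Mathlib


open Finset

/-- Explicit score formula for the harmonic electorate. -/
noncomputable def fregeS (m t j : ℕ) : ℝ :=
  (∑ u ∈ Finset.Icc 1 (min t (j + 1)), 1 / ((m : ℝ) - u + 1)) -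
    (if j + 1 < t then 1 else 0)

/-- Modified Frege with the harmonic electorate: with lexicographic tie-breaking,
candidate t wins round t; consequently the last candidate has no wins by time
m-1 while its cumulative vote share is the harmonic sum Σ_{i=2}^m 1/i. -/
theorem modified_frege_unbounded_lower_quota_violation (m : ℕ) (hm : 2 ≤ m)
    (p s : ℕ → Fin m → ℝ) (w : ℕ → Fin m)
    (hp : ∀ t, 1 ≤ t → t ≤ m → ∀ j : Fin m,
      p t j = if (j : ℕ) + 1 < t then 0 else 1 / ((m : ℝ) - t + 1))
    (hs1 : ∀ j, s 1 j = p 1 j)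
    (hsrec : ∀ t, 1 ≤ t → t + 1 ≤ m → ∀ j,
      s (t + 1) j = s t j + p (t + 1) j - (if w t = j then 1 else 0))
    (hw : ∀ t, 1 ≤ t → t ≤ m → ∀ j : Fin m,
      s t j < s t (w t) ∨ (s t j = s t (w t) ∧ w t ≤ j)) :
    (∀ t, 1 ≤ t → t ≤ m → (w t : ℕ) = t - 1) ∧
      (((Finset.Icc 1 (m - 1)).filter
          (fun u => w u = (⟨m - 1, by omega⟩ : Fin m))).card = 0) ∧
      (∑ u ∈ Finset.Icc 1 (m - 1), p u (⟨m - 1, by omega⟩ : Fin m)) =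
        ∑ i ∈ Finset.Icc 2 m, 1 / (i : ℝ) := by
  have hpos : ∀ u : ℕ, u ≤ m → (0 : ℝ) < 1 / ((m : ℝ) - u + 1) := by
    intro u hu
    have hu' : (u : ℝ) ≤ m := by exact_mod_cast hu
    have : (0 : ℝ) < (m : ℝ) - u + 1 := by linarith
    exact div_pos one_pos this
  -- the winner lemma: if the scores at round t are given by the formula,
  -- then the winner of round t is candidate t-1
  have hwin : ∀ t, 1 ≤ t → t ≤ m →
      (∀ j : Fin m, s t j = fregeS m t (j : ℕ)) → (w t : ℕ) = t - 1 := by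
    intro t ht1 htm hform
    have hlt : t - 1 < m := by omega
    set j0 : Fin m := ⟨t - 1, hlt⟩ with hj0def
    have hj0 : s t j0 = ∑ u ∈ Finset.Icc 1 t, 1 / ((m : ℝ) - u + 1) := by
      rw [hform j0, fregeS]
      have h1 : min t ((j0 : ℕ) + 1) = t := by simp [hj0def]; omega
      have h2 : ¬ ((j0 : ℕ) + 1 < t) := by simp [hj0def]; omega
      rw [h1, if_neg h2]; ring
    by_cases hc : t ≤ (w t : ℕ) + 1
    · -- leading candidate: same score as j0
      have hwt : s t (w t) = ∑ u ∈ Finset.Icc 1 t, 1 / ((m : ℝ) - u + 1) := by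
        rw [hform (w t), fregeS]
        have h1 : min t ((w t : ℕ) + 1) = t := by omega
        have h2 : ¬ ((w t : ℕ) + 1 < t) := by omega
        rw [h1, if_neg h2]; ring
      rcases hw t ht1 htm j0 with h | ⟨_, hle⟩
      · rw [hj0, hwt] at h; exact absurd h (lt_irrefl _)
      · have : (w t : ℕ) ≤ t - 1 := hle
        omega
    · push_neg at hc
      have hwt : s t (w t) =
          (∑ u ∈ Finset.Icc 1 ((w t : ℕ) + 1), 1 / ((m : ℝ) - u + 1)) - 1 := by
        rw [hform (w t), fregeS]
        have h1 : min t ((w t : ℕ) + 1) = (w t : ℕ) + 1 := by omega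
        rw [h1, if_pos hc]
      have hsum : (∑ u ∈ Finset.Icc 1 ((w t : ℕ) + 1), 1 / ((m : ℝ) - u + 1)) ≤
          ∑ u ∈ Finset.Icc 1 t, 1 / ((m : ℝ) - u + 1) := by
        apply Finset.sum_le_sum_of_subset_of_nonneg
        · intro x hx
          simp only [Finset.mem_Icc] at *
          omega
        · intro u hu _
          simp only [Finset.mem_Icc] at hu
          exact le_of_lt (hpos u (by omega))
      have hslt : s t (w t) < s t j0 := by rw [hj0, hwt]; linarith
      rcases hw t ht1 htm j0 with h | ⟨he, _⟩
      · linarith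
      · linarith
  -- main induction: the score formula holds and candidate t-1 wins round t
  have key : ∀ t, 1 ≤ t → t ≤ m →
      (∀ j : Fin m, s t j = fregeS m t (j : ℕ)) ∧ (w t : ℕ) = t - 1 := by
    intro t
    induction t with
    | zero => intro h; omega
    | succ n ih =>
      intro h1 hle
      by_cases hn : n = 0
      · subst hn
        have hform : ∀ j : Fin m, s 1 j = fregeS m 1 (j : ℕ) := by
          intro j
          rw [hs1 j, hp 1 le_rfl (by omega) j, fregeS]
          have h2 : ¬ ((j : ℕ) + 1 < 1) := by omega
          have h3 : min 1 ((j : ℕ) + 1) = 1 := by omega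
          rw [if_neg h2, h3, if_neg h2]
          simp
        exact ⟨hform, hwin 1 le_rfl (by omega) hform⟩
      · have hn1 : 1 ≤ n := by omega
        obtain ⟨ihf, ihw⟩ := ih hn1 (by omega)
        have hwne : ∀ j : Fin m, (j : ℕ) + 1 ≠ n → w n ≠ j := by
          intro j hj heq
          have := congrArg Fin.val heq
          rw [ihw] at this
          omega
        have hform : ∀ j : Fin m, s (n + 1) j = fregeS m (n + 1) (j : ℕ) := by
          intro j
          rw [hsrec n hn1 hle j, ihf j, hp (n + 1) (by omega) hle j, fregeS, fregeS]
          rcases lt_trichotomy ((j : ℕ) + 1) n with hcase | hcase | hcase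
          · have e1 : min n ((j : ℕ) + 1) = (j : ℕ) + 1 := by omega
            have e2 : min (n + 1) ((j : ℕ) + 1) = (j : ℕ) + 1 := by omega
            rw [e1, e2, if_pos hcase, if_pos (by omega : (j : ℕ) + 1 < n + 1),
              if_pos (by omega : (j : ℕ) + 1 < n + 1),
              if_neg (hwne j (by omega))]
            ring
          · have e1 : min n ((j : ℕ) + 1) = n := by omega
            have e2 : min (n + 1) ((j : ℕ) + 1) = n := by omega
            have hwn : w n = j := by
              apply Fin.ext
              rw [ihw]; omega
            rw [e1, e2, if_neg (by omega : ¬ ((j : ℕ) + 1 < n)),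
              if_pos (by omega : (j : ℕ) + 1 < n + 1),
              if_pos (by omega : (j : ℕ) + 1 < n + 1), if_pos hwn]
            ring
          · have e1 : min n ((j : ℕ) + 1) = n := by omega
            have e2 : min (n + 1) ((j : ℕ) + 1) = n + 1 := by omega
            rw [e1, e2, if_neg (by omega : ¬ ((j : ℕ) + 1 < n)),
              if_neg (by omega : ¬ ((j : ℕ) + 1 < n + 1)),
              if_neg (by omega : ¬ ((j : ℕ) + 1 < n + 1)),
              if_neg (hwne j (by omega)),
              Finset.sum_Icc_succ_top (by omega : 1 ≤ n + 1)]
            push_cast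
            ring
        exact ⟨hform, hwin (n + 1) (by omega) hle hform⟩
  refine ⟨fun t h1 h2 => (key t h1 h2).2, ?_, ?_⟩
  · rw [Finset.card_eq_zero, Finset.filter_eq_empty_iff]
    intro u hu
    simp only [Finset.mem_Icc] at hu
    intro heq
    have hwu := (key u hu.1 (by omega)).2
    have := congrArg Fin.val heq
    rw [hwu] at this
    simp at this
    omega
  · have hpval : ∀ u ∈ Finset.Icc 1 (m - 1),
        p u (⟨m - 1, by omega⟩ : Fin m) = 1 / ((m : ℝ) - u + 1) := by
      intro u hu
      simp only [Finset.mem_Icc] at hu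
      rw [hp u hu.1 (by omega)]
      have : ¬ ((((⟨m - 1, by omega⟩ : Fin m) : ℕ)) + 1 < u) := by
        simp; omega
      rw [if_neg this]
    rw [Finset.sum_congr rfl hpval]
    apply Finset.sum_nbij' (fun u => m + 1 - u) (fun i => m + 1 - i)
    · intro a ha
      simp only [Finset.mem_Icc] at *
      omega
    · intro a ha
      simp only [Finset.mem_Icc] at *
      omega
    · intro a ha
      simp only [Finset.mem_Icc] at ha
      omega
    · intro a ha
      simp only [Finset.mem_Icc] at ha
      omega
    · intro a ha
      simp only [Finset.mem_Icc] at ha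
      have : ((m + 1 - a : ℕ) : ℝ) = (m : ℝ) + 1 - a := by
        push_cast [Nat.cast_sub (by omega : a ≤ m + 1)]
        ring
      rw [this]
      ring_nf
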